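/- Define, for natural numbers p, q, the rational number c(p,q) = (−1)^q · (B_{p+q}/(p+q)!) · binom(p+q, q). Then for all natural numbers p, q: c(p,q) + Σ_{i=0}^{p} c(p+1−i, q)·c(i,0) − Σ_{j=0}^{q} c(p, q+1−j)·c(0,j) = 0. -/

import Mathlib

open Finset

/-- `c(p,q) = (-1)^q · (B_{p+q}/(p+q)!) · C(p+q, q)` with the convention B₁ = -1/2. -/
def lsCoeff (p q : ℕ) : ℚ :=
  (-1) ^ q * (bernoulli (p + q) / (p + q).factorial) * ((p + q).choose q)

namespace LsAux

lemma lsCoeff_eq (p q : ℕ) :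
    lsCoeff p q = (-1) ^ q * bernoulli (p + q) / (p.factorial * q.factorial) := by
  have h := Nat.choose_mul_factorial_mul_factorial (Nat.le_add_left q p)
  have h2 : p + q - q = p := by omega
  rw [h2] at h
  have hc : (((p+q).choose q : ℚ)) * q.factorial * p.factorial = (p+q).factorial := by
    exact_mod_cast h
  have h1 : ((p+q).factorial : ℚ) ≠ 0 := Nat.cast_ne_zero.mpr (p+q).factorial_ne_zero
  have h3 : (p.factorial : ℚ) ≠ 0 := Nat.cast_ne_zero.mpr p.factorial_ne_zero
  have h4 : (q.factorial : ℚ) ≠ 0 := Nat.cast_ne_zero.mpr q.factorial_ne_zero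
  rw [lsCoeff]
  field_simp
  linear_combination (bernoulli (p+q)) * hc

lemma bern_vandermonde (p q : ℕ) :
    ∑ i ∈ range (p+1), ∑ a ∈ range (q+1),
      (p.choose i : ℚ) * (q.choose a) * bernoulli (i+a)
    = bernoulli (p+q) + if p + q = 1 then 1 else 0 := by
  set n := p + q with hn
  have hR : bernoulli (p+q) + (if p + q = 1 then 1 else 0)
      = ∑ k ∈ range (n+1), (n.choose k : ℚ) * bernoulli k := by
    rw [Finset.sum_range_succ, sum_bernoulli, Nat.choose_self]
    push_cast; ring
  rw [hR]
  have h1 : ∀ k, (n.choose k : ℚ) * bernoulli k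
      = ∑ ij ∈ Finset.HasAntidiagonal.antidiagonal k, (p.choose ij.1 : ℚ) * (q.choose ij.2) * bernoulli (ij.1 + ij.2) := by
    intro k
    rw [hn, Nat.add_choose_eq]
    push_cast
    rw [Finset.sum_mul]
    refine Finset.sum_congr rfl ?_
    intro ij hij
    rw [Finset.HasAntidiagonal.mem_antidiagonal] at hij
    rw [hij]
  have hdisj : (↑(range (n+1)) : Set ℕ).PairwiseDisjoint (fun k => Finset.HasAntidiagonal.antidiagonal k) := by
    intro k _ k' _ hkk'
    simp only [Function.onFun, Finset.disjoint_left, Finset.HasAntidiagonal.mem_antidiagonal]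
    intro x hx hx'
    exact hkk' (hx ▸ hx')
  calc ∑ i ∈ range (p+1), ∑ a ∈ range (q+1), (p.choose i : ℚ) * (q.choose a) * bernoulli (i+a)
      = ∑ x ∈ range (p+1) ×ˢ range (q+1), (p.choose x.1 : ℚ) * (q.choose x.2) * bernoulli (x.1+x.2) := by
        rw [Finset.sum_product]
    _ = ∑ x ∈ (range (n+1)).biUnion (fun k => Finset.HasAntidiagonal.antidiagonal k),
          (p.choose x.1 : ℚ) * (q.choose x.2) * bernoulli (x.1+x.2) := by
        apply Finset.sum_subset
        · intro x hx
          simp only [Finset.mem_product, Finset.mem_range] at hx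
          simp only [Finset.mem_biUnion, Finset.mem_range, Finset.HasAntidiagonal.mem_antidiagonal]
          exact ⟨x.1 + x.2, by omega, rfl⟩
        · intro x hx hx'
          simp only [Finset.mem_product, Finset.mem_range, not_and_or, not_lt] at hx'
          rcases hx' with h | h
          · rw [Nat.choose_eq_zero_of_lt (show p < x.1 by omega)]; push_cast; ring
          · rw [Nat.choose_eq_zero_of_lt (show q < x.2 by omega)]; push_cast; ring
    _ = ∑ k ∈ range (n+1), ∑ ij ∈ Finset.HasAntidiagonal.antidiagonal k,
          (p.choose ij.1 : ℚ) * (q.choose ij.2) * bernoulli (ij.1+ij.2) := by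
        rw [Finset.sum_biUnion hdisj]
    _ = ∑ k ∈ range (n+1), (n.choose k : ℚ) * bernoulli k := by
        exact Finset.sum_congr rfl fun k _ => (h1 k).symm

open PowerSeries

noncomputable section

abbrev Rq : Type := PowerSeries ℚ
abbrev Dq : Type := PowerSeries Rq

def FF : Dq := PowerSeries.mk fun p => PowerSeries.mk fun q => lsCoeff p q
def Fx : Dq := PowerSeries.map (PowerSeries.C (R := ℚ)) (bernoulliPowerSeries ℚ)
def Ex : Dq := PowerSeries.map (PowerSeries.C (R := ℚ)) (PowerSeries.exp ℚ)
def Gy : Rq := PowerSeries.rescale (-1) (bernoulliPowerSeries ℚ)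
def ey : Rq := PowerSeries.rescale (-1) (PowerSeries.exp ℚ)
def Fy : Dq := PowerSeries.C Gy
def Ey : Dq := PowerSeries.C ey
def Yc : Dq := PowerSeries.C (PowerSeries.X : Rq)

lemma I1 : Fx * (Ex - 1) = (X : Dq) := by
  have h := bernoulliPowerSeries_mul_exp_sub_one ℚ
  have := congrArg (PowerSeries.map (PowerSeries.C (R := ℚ))) h
  simpa [Fx, Ex, map_mul, map_sub, map_one] using this

lemma I2 : Gy * (ey - 1) = -(X : Rq) := by
  have h := bernoulliPowerSeries_mul_exp_sub_one ℚ
  have := congrArg (PowerSeries.rescale (-1 : ℚ)) h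
  rw [map_mul, map_sub, map_one] at this
  rw [Gy, ey, this]
  ext n
  simp [coeff_rescale, coeff_X]

lemma I2' : Fy * (Ey - 1) = -Yc := by
  have := congrArg (PowerSeries.C (R := Rq)) I2
  simpa [Fy, Ey, Yc, map_mul, map_sub, map_one, map_neg] using this

lemma coeff_ey (b : ℕ) : PowerSeries.coeff b ey = (-1)^b * (1 / b.factorial) := by
  simp [ey, coeff_rescale, coeff_exp]

lemma coeff_Ex (j : ℕ) : PowerSeries.coeff j Ex = PowerSeries.C ((1 : ℚ) / j.factorial) := by
  simp [Ex, PowerSeries.coeff_map, coeff_exp, PowerSeries.algebraMap_apply]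

lemma coeff_Fx (k : ℕ) : PowerSeries.coeff k Fx = PowerSeries.C (lsCoeff k 0) := by
  have : lsCoeff k 0 = bernoulli k / k.factorial := by
    simp [lsCoeff]
  simp [Fx, PowerSeries.coeff_map, bernoulliPowerSeries, coeff_mk, this]

lemma coeff_Gy (b : ℕ) : PowerSeries.coeff b Gy = lsCoeff 0 b := by
  have : lsCoeff 0 b = (-1)^b * (bernoulli b / b.factorial) := by
    simp [lsCoeff]
  simp [Gy, coeff_rescale, bernoulliPowerSeries, coeff_mk, this]

lemma coeff_FF (i q : ℕ) :
    PowerSeries.coeff q (PowerSeries.coeff i FF) = lsCoeff i q := by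
  simp [FF, coeff_mk]

lemma I3 : FF * (Ex * Ey - 1) = (X : Dq) - Yc := by
  have hFE : ∀ i : ℕ, PowerSeries.coeff i (FF * Ey)
      = (PowerSeries.mk fun b => lsCoeff i b) * ey := by
    intro i
    rw [Ey, PowerSeries.coeff_mul_C, FF, coeff_mk]
  apply PowerSeries.ext; intro p
  apply PowerSeries.ext; intro q
  have hre : FF * (Ex * Ey - 1) = (FF * Ey) * Ex - FF := by ring
  rw [hre]
  have h1 : PowerSeries.coeff p ((FF * Ey) * Ex)
      = ∑ x ∈ Finset.HasAntidiagonal.antidiagonal p,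
          ((PowerSeries.mk fun b => lsCoeff x.1 b) * ey) * PowerSeries.C ((1:ℚ)/x.2.factorial) := by
    rw [PowerSeries.coeff_mul]
    exact Finset.sum_congr rfl fun x _ => by rw [hFE, coeff_Ex]
  rw [map_sub, map_sub, h1, map_sum]
  -- compute each coefficient
  have h2 : ∀ x : ℕ × ℕ, PowerSeries.coeff q
        (((PowerSeries.mk fun b => lsCoeff x.1 b) * ey) * PowerSeries.C ((1:ℚ)/x.2.factorial))
      = (∑ y ∈ Finset.HasAntidiagonal.antidiagonal q, lsCoeff x.1 y.1 * ((-1)^y.2 * (1/y.2.factorial)))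
          * ((1:ℚ)/x.2.factorial) := by
    intro x
    rw [PowerSeries.coeff_mul_C, PowerSeries.coeff_mul]
    congr 1
    exact Finset.sum_congr rfl fun y _ => by rw [coeff_mk, coeff_ey]
  simp_rw [h2, coeff_FF]
  -- right hand side
  rw [map_sub, PowerSeries.coeff_X, Yc, PowerSeries.coeff_C]
  -- convert antidiagonal sums to range sums
  rw [Finset.Nat.sum_antidiagonal_eq_sum_range_succ_mk]
  simp_rw [Finset.Nat.sum_antidiagonal_eq_sum_range_succ_mk]
  -- now pure arithmetic identity
  have key := bern_vandermonde p q
  have hmain : ∑ i ∈ range (p+1),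
      (∑ a ∈ range (q+1), lsCoeff i a * ((-1)^(q-a) * (1/(q-a).factorial))) * ((1:ℚ)/(p-i).factorial)
      = (-1)^q / (p.factorial * q.factorial) * (bernoulli (p+q) + if p + q = 1 then 1 else 0) := by
    rw [← key, Finset.mul_sum]
    refine Finset.sum_congr rfl ?_
    intro i hi
    rw [Finset.mem_range] at hi
    rw [Finset.sum_mul, Finset.mul_sum]
    refine Finset.sum_congr rfl ?_
    intro a ha
    rw [Finset.mem_range] at ha
    have hip : i ≤ p := by omega
    have haq : a ≤ q := by omega
    have hp := Nat.choose_mul_factorial_mul_factorial hip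
    have hq := Nat.choose_mul_factorial_mul_factorial haq
    have hpc : ((p.choose i : ℚ)) * i.factorial * (p-i).factorial = p.factorial := by
      exact_mod_cast hp
    have hqc : ((q.choose a : ℚ)) * a.factorial * (q-a).factorial = q.factorial := by
      exact_mod_cast hq
    have hs : ((-1 : ℚ))^a * (-1)^(q-a) = (-1)^q := by
      rw [← pow_add]; congr 1; omega
    have f1 : (i.factorial : ℚ) ≠ 0 := Nat.cast_ne_zero.mpr i.factorial_ne_zero
    have f2 : (a.factorial : ℚ) ≠ 0 := Nat.cast_ne_zero.mpr a.factorial_ne_zero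
    have f3 : ((p-i).factorial : ℚ) ≠ 0 := Nat.cast_ne_zero.mpr (p-i).factorial_ne_zero
    have f4 : ((q-a).factorial : ℚ) ≠ 0 := Nat.cast_ne_zero.mpr (q-a).factorial_ne_zero
    have f5 : (p.factorial : ℚ) ≠ 0 := Nat.cast_ne_zero.mpr p.factorial_ne_zero
    have f6 : (q.factorial : ℚ) ≠ 0 := Nat.cast_ne_zero.mpr q.factorial_ne_zero
    have hpc' : (1:ℚ)/(i.factorial * (p-i).factorial) = (p.choose i)/p.factorial := by
      rw [div_eq_div_iff (mul_ne_zero f1 f3) f5]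
      linear_combination -hpc
    have hqc' : (1:ℚ)/(a.factorial * (q-a).factorial) = (q.choose a)/q.factorial := by
      rw [div_eq_div_iff (mul_ne_zero f2 f4) f6]
      linear_combination -hqc
    calc lsCoeff i a * ((-1)^(q-a) * (1/(q-a).factorial)) * ((1:ℚ)/(p-i).factorial)
        = ((-1)^a*(-1)^(q-a)) * bernoulli (i+a)
            * ((1/(i.factorial*(p-i).factorial)) * ((1:ℚ)/(a.factorial*(q-a).factorial))) := by
          rw [lsCoeff_eq]; field_simp
      _ = (-1)^q * bernoulli (i+a) * (((p.choose i : ℚ)/p.factorial) * ((q.choose a : ℚ)/q.factorial)) := by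
          rw [hs, hpc', hqc']
      _ = (-1)^q / (p.factorial * q.factorial) * ((p.choose i : ℚ) * (q.choose a) * bernoulli (i+a)) := by
          field_simp
  rw [hmain, lsCoeff_eq]
  rcases Nat.eq_zero_or_pos (p+q) with h0 | hpos
  · have hp0 : p = 0 := by omega
    have hq0 : q = 0 := by omega
    subst hp0; subst hq0
    norm_num
  · rcases eq_or_ne (p+q) 1 with h1 | h1
    · rcases (by omega : p = 1 ∧ q = 0 ∨ p = 0 ∧ q = 1) with ⟨hp, hq⟩ | ⟨hp, hq⟩
      · subst hp; subst hq; norm_num [bernoulli_one]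
      · subst hp; subst hq; norm_num [bernoulli_one]
    · have hp1 : ¬(p = 1 ∧ q = 0) := by omega
      have hq1 : ¬(p = 0 ∧ q = 1) := by omega
      rw [if_neg h1]
      rcases eq_or_ne p 1 with hp | hp
      · have hq' : q ≠ 0 := by omega
        simp [hp, hq', PowerSeries.coeff_X, PowerSeries.coeff_one]
        ring
      · rcases eq_or_ne p 0 with hp0 | hp0
        · have hq' : q ≠ 1 := by omega
          simp [hp, hp0, hq']
          rw [PowerSeries.coeff_X, if_neg hq', neg_zero]
          ring
        · simp [hp, hp0, PowerSeries.coeff_X, PowerSeries.coeff_one]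
          ring

lemma hAne : Ex - (1 : Dq) ≠ 0 := by
  intro h
  have h1 := congrArg (PowerSeries.coeff 1) h
  rw [map_sub, coeff_Ex, PowerSeries.coeff_one] at h1
  simp at h1

lemma hBne : Ey - (1 : Dq) ≠ 0 := by
  intro h
  have h1 := congrArg (PowerSeries.coeff 1) (congrArg (PowerSeries.coeff 0) h)
  rw [map_sub, Ey, PowerSeries.coeff_zero_C, PowerSeries.coeff_one] at h1
  simp [coeff_ey, PowerSeries.coeff_one] at h1

lemma hUne : Ex * Ey - (1 : Dq) ≠ 0 := by
  intro h
  have h1 := congrArg (PowerSeries.coeff 1) (congrArg (PowerSeries.coeff 1) h)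
  rw [map_sub, Ey, PowerSeries.coeff_mul_C, coeff_Ex, PowerSeries.coeff_one] at h1
  simp [coeff_ey, PowerSeries.coeff_one] at h1

lemma mainSeries :
    PowerSeries.X * Yc * FF + Yc * (Fx * FF) + PowerSeries.X * (Fx * Fy)
      = PowerSeries.X * (Fy * FF) + Yc * (Fx * Fy) := by
  have hcancel : ((Ex - 1) * (Ey - 1) * (Ex * Ey - 1)) ≠ 0 :=
    mul_ne_zero (mul_ne_zero hAne hBne) hUne
  apply mul_right_cancel₀ hcancel
  linear_combination
    (Yc*(PowerSeries.X - Yc)*(Ey-1) - PowerSeries.X*Yc*(Ex*Ey-1) + Yc^2*(Ex*Ey-1)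
      + PowerSeries.X*(Ex*Ey-1)*(Fy*(Ey-1)+Yc) + Yc*(Ey-1)*(FF*(Ex*Ey-1) - PowerSeries.X + Yc)
      - Yc*(Ex*Ey-1)*(Fy*(Ey-1)+Yc)) * I1
    + (PowerSeries.X*PowerSeries.X*(Ex*Ey-1) - PowerSeries.X*(Ex-1)*(PowerSeries.X-Yc)
      - PowerSeries.X*Yc*(Ex*Ey-1) - PowerSeries.X*(Ex-1)*(FF*(Ex*Ey-1) - PowerSeries.X + Yc)) * I2'
    + (PowerSeries.X*Yc*(Ex-1)*(Ey-1) + Yc*(Ey-1)*PowerSeries.X + PowerSeries.X*Yc*(Ex-1)) * I3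

lemma c1 (p q : ℕ) :
    PowerSeries.coeff (q+1) (PowerSeries.coeff (p+1) (PowerSeries.X * Yc * FF)) = lsCoeff p q := by
  rw [mul_assoc, PowerSeries.coeff_succ_X_mul, Yc, PowerSeries.coeff_C_mul,
    PowerSeries.coeff_succ_X_mul, coeff_FF]

lemma c2 (p q : ℕ) :
    PowerSeries.coeff (q+1) (PowerSeries.coeff (p+1) (Yc * (Fx * FF)))
      = ∑ k ∈ range (p+2), lsCoeff k 0 * lsCoeff (p+1-k) q := by
  rw [Yc, PowerSeries.coeff_C_mul, PowerSeries.coeff_succ_X_mul, PowerSeries.coeff_mul, map_sum,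
    Finset.Nat.sum_antidiagonal_eq_sum_range_succ_mk]
  refine Finset.sum_congr rfl ?_
  intro k _
  rw [coeff_Fx, PowerSeries.coeff_C_mul, coeff_FF]

lemma c3 (p q : ℕ) :
    PowerSeries.coeff (q+1) (PowerSeries.coeff (p+1) (PowerSeries.X * (Fx * Fy)))
      = lsCoeff p 0 * lsCoeff 0 (q+1) := by
  rw [PowerSeries.coeff_succ_X_mul, Fy, PowerSeries.coeff_mul_C, coeff_Fx,
    PowerSeries.coeff_C_mul, coeff_Gy]

lemma c4 (p q : ℕ) :
    PowerSeries.coeff (q+1) (PowerSeries.coeff (p+1) (PowerSeries.X * (Fy * FF)))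
      = ∑ j ∈ range (q+2), lsCoeff 0 j * lsCoeff p (q+1-j) := by
  rw [PowerSeries.coeff_succ_X_mul, Fy, PowerSeries.coeff_C_mul, PowerSeries.coeff_mul,
    Finset.Nat.sum_antidiagonal_eq_sum_range_succ_mk]
  refine Finset.sum_congr rfl ?_
  intro j _
  rw [coeff_Gy, FF, coeff_mk, coeff_mk]

lemma c5 (p q : ℕ) :
    PowerSeries.coeff (q+1) (PowerSeries.coeff (p+1) (Yc * (Fx * Fy)))
      = lsCoeff (p+1) 0 * lsCoeff 0 q := by
  rw [Yc, PowerSeries.coeff_C_mul, Fy, PowerSeries.coeff_mul_C, coeff_Fx,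
    PowerSeries.coeff_succ_X_mul, PowerSeries.coeff_C_mul, coeff_Gy]

end

end LsAux

theorem lsCoeff_identity (p q : ℕ) :
    lsCoeff p q + (∑ i ∈ Finset.range (p + 1), lsCoeff (p + 1 - i) q * lsCoeff i 0)
      - ∑ j ∈ Finset.range (q + 1), lsCoeff p (q + 1 - j) * lsCoeff 0 j = 0 := by
  have hco : PowerSeries.coeff (q+1) (PowerSeries.coeff (p+1)
        (PowerSeries.X * LsAux.Yc * LsAux.FF + LsAux.Yc * (LsAux.Fx * LsAux.FF)
          + PowerSeries.X * (LsAux.Fx * LsAux.Fy)))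
      = PowerSeries.coeff (q+1) (PowerSeries.coeff (p+1)
        (PowerSeries.X * (LsAux.Fy * LsAux.FF) + LsAux.Yc * (LsAux.Fx * LsAux.Fy))) := by
    rw [LsAux.mainSeries]
  rw [map_add, map_add, map_add, map_add, map_add, map_add] at hco
  rw [LsAux.c1, LsAux.c2, LsAux.c3, LsAux.c4, LsAux.c5] at hco
  rw [Finset.sum_range_succ (fun k => lsCoeff k 0 * lsCoeff (p+1-k) q) (p+1),
    Finset.sum_range_succ (fun j => lsCoeff 0 j * lsCoeff p (q+1-j)) (q+1)] at hco
  simp only [Nat.add_sub_cancel, Nat.sub_self] at hco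
  have e1 : ∑ i ∈ Finset.range (p + 1), lsCoeff (p + 1 - i) q * lsCoeff i 0
      = ∑ i ∈ Finset.range (p + 1), lsCoeff i 0 * lsCoeff (p + 1 - i) q :=
    Finset.sum_congr rfl fun i _ => mul_comm _ _
  have e2 : ∑ j ∈ Finset.range (q + 1), lsCoeff p (q + 1 - j) * lsCoeff 0 j
      = ∑ j ∈ Finset.range (q + 1), lsCoeff 0 j * lsCoeff p (q + 1 - j) :=
    Finset.sum_congr rfl fun j _ => mul_comm _ _
  rw [e1, e2]
  linear_combination hco
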